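/- Let (Y,θ) be a generating system of nondegenerate regular A-correspondences, let γ denote the gauge action of 𝕋 on O_{Y_1}, and let ℰY_2 = Y_2 ⊗_A O_{Y_1} be the O_{Y_1}-correspondence with left action determined by θ_{12}. Then for every z ∈ 𝕋 the pair (γ_z, 1_{Y_2} ⊗ γ_z) is a C*-correspondence automorphism of ℰY_2: it satisfies (1_{Y_2} ⊗ γ_z)(T · ξ) = γ_z(T) · (1_{Y_2} ⊗ γ_z)(ξ), ⟨(1_{Y_2} ⊗ γ_z)ξ, (1_{Y_2} ⊗ γ_z)η⟩_{O_{Y_1}} = γ_z(⟨ξ,η⟩_{O_{Y_1}}) for all T ∈ O_{Y_1} and ξ,η ∈ ℰY_2, and is surjective. -/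

import Mathlib

/- ############################################################
   Common framework: C*-correspondences, interior tensor products
   (characterized relationally), representations, Cuntz–Pimsner algebras,
   product systems over ℕ^k, generating systems, and the ℰ / ℛθ
   constructions of the paper (characterized relationally).
   ############################################################ -/

noncomputable section

open Filter Topology

universe u

/-- A C*-correspondence over a (not necessarily unital) C*-algebra `A`:
a right Hilbert `A`-module `X` together with a left action of `A` by
adjointable (bounded) operators.  The rank-one operators `θ_{x,y}` are
bundled as data together with their defining property. -/
structure Corr (A : Type u) [NonUnitalCStarAlgebra A] : Type (u + 1) where
  X : Type u
  [nacg : NormedAddCommGroup X]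
  [nsp : NormedSpace ℂ X]
  [cmpl : CompleteSpace X]
  /-- right action of `A` -/
  ract : X → A → X
  /-- `A`-valued inner product -/
  inner : X → X → A
  /-- left action `φ : A → L(X)` by adjointable operators -/
  lactL : A → X →L[ℂ] X
  /-- the rank-one ("compact") operators `θ_{x,y} z = x ⬝ ⟨y, z⟩` -/
  rankOne : X → X → X →L[ℂ] X
  ract_add_left : ∀ x y a, ract (x + y) a = ract x a + ract y a
  ract_add_right : ∀ x a b, ract x (a + b) = ract x a + ract x b
  ract_mul : ∀ x a b, ract x (a * b) = ract (ract x a) b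
  ract_smul : ∀ (c : ℂ) x a, ract (c • x) a = c • ract x a
  ract_smul' : ∀ (c : ℂ) x a, ract x (c • a) = c • ract x a
  inner_add_right : ∀ x y z, inner x (y + z) = inner x y + inner x z
  inner_smul_right : ∀ (c : ℂ) x y, inner x (c • y) = c • inner x y
  inner_star : ∀ x y, star (inner x y) = inner y x
  inner_ract_right : ∀ x y a, inner x (ract y a) = inner x y * a
  norm_eq : ∀ x, ‖x‖ ^ 2 = ‖inner x x‖
  lact_add : ∀ a b, lactL (a + b) = lactL a + lactL b
  lact_mul : ∀ a b, lactL (a * b) = (lactL a).comp (lactL b)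
  lact_smul : ∀ (c : ℂ) a, lactL (c • a) = c • lactL a
  lact_adjoint : ∀ a x y, inner (lactL a x) y = inner x (lactL (star a) y)
  rankOne_apply : ∀ x y z, rankOne x y z = ract x (inner y z)

attribute [instance] Corr.nacg Corr.nsp Corr.cmpl

variable {A : Type u} [NonUnitalCStarAlgebra A]

/-- Nondegeneracy: `A·X` is (topologically) all of `X`. -/
def Corr.Nondeg (W : Corr A) : Prop :=
  closure (Submodule.span ℂ {y : W.X | ∃ a x, y = W.lactL a x} : Set W.X) = Set.univ

/-- Regularity: the left action is injective and takes values in the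
compact operators (the closed span of the rank-one operators). -/
def Corr.Regular (W : Corr A) : Prop :=
  (∀ a, W.lactL a = 0 → a = 0) ∧
    ∀ a, W.lactL a ∈
      closure (Submodule.span ℂ {T : W.X →L[ℂ] W.X | ∃ x y, T = W.rankOne x y} :
        Set (W.X →L[ℂ] W.X))

/-- standing hypotheses of the paper: nondegenerate and regular -/
def Corr.Reg (W : Corr A) : Prop := W.Nondeg ∧ W.Regular

/-- a bare function which is a continuous `ℂ`-linear map -/
structure IsCLMap {E F : Type u} [NormedAddCommGroup E] [NormedSpace ℂ E]
    [NormedAddCommGroup F] [NormedSpace ℂ F] (f : E → F) : Prop where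
  map_add : ∀ x y, f (x + y) = f x + f y
  map_smul : ∀ (c : ℂ) x, f (c • x) = c • f x
  cont : Continuous f

/-- a map of correspondences over the same algebra which is an isomorphism -/
structure IsCorrIsoFun (W Z : Corr A) (f : W.X → Z.X) : Prop where
  bijective : Function.Bijective f
  map_add : ∀ x y, f (x + y) = f x + f y
  map_smul : ∀ (c : ℂ) x, f (c • x) = c • f x
  map_inner : ∀ x y, Z.inner (f x) (f y) = W.inner x y
  map_ract : ∀ x a, f (W.ract x a) = Z.ract (f x) a
  map_lact : ∀ a x, f (W.lactL a x) = Z.lactL a (f x)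

/-- an isomorphism of correspondences over the same algebra (bundled) -/
structure CorrIso (W Z : Corr A) : Type u where
  toFun : W.X → Z.X
  invFun : Z.X → W.X
  left_inv : ∀ x, invFun (toFun x) = x
  right_inv : ∀ y, toFun (invFun y) = y
  map_add : ∀ x y, toFun (x + y) = toFun x + toFun y
  map_smul : ∀ (c : ℂ) x, toFun (c • x) = c • toFun x
  map_inner : ∀ x y, Z.inner (toFun x) (toFun y) = W.inner x y
  map_ract : ∀ x a, toFun (W.ract x a) = Z.ract (toFun x) a
  map_lact : ∀ a x, toFun (W.lactL a x) = Z.lactL a (toFun x)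

/-- an isomorphism of correspondences lying over an isomorphism `Φ` of the
coefficient algebras -/
structure CorrIsoOver {B : Type u} [NonUnitalCStarAlgebra B]
    (Φ : A → B) (W : Corr A) (Z : Corr B) : Type u where
  toFun : W.X → Z.X
  bijective : Function.Bijective toFun
  map_add : ∀ x y, toFun (x + y) = toFun x + toFun y
  map_smul : ∀ (c : ℂ) x, toFun (c • x) = c • toFun x
  map_inner : ∀ x y, Z.inner (toFun x) (toFun y) = Φ (W.inner x y)
  map_ract : ∀ x a, toFun (W.ract x a) = Z.ract (toFun x) (Φ a)
  map_lact : ∀ a x, toFun (W.lactL a x) = Z.lactL (Φ a) (toFun x)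

/-- `T`, together with the bilinear map `m`, is a realization of the
balanced (interior) tensor product `W ⊗_A V` of correspondences over `A`. -/
structure IsTensor (W V T : Corr A) (m : W.X → V.X → T.X) : Prop where
  add_left : ∀ x x' y, m (x + x') y = m x y + m x' y
  add_right : ∀ x y y', m x (y + y') = m x y + m x y'
  smul_left : ∀ (c : ℂ) x y, m (c • x) y = c • m x y
  smul_right : ∀ (c : ℂ) x y, m x (c • y) = c • m x y
  balanced : ∀ x a y, m (W.ract x a) y = m x (V.lactL a y)
  inner : ∀ x y x' y',
    T.inner (m x y) (m x' y') = V.inner y (V.lactL (W.inner x x') y')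
  ract : ∀ x y a, T.ract (m x y) a = m x (V.ract y a)
  lact : ∀ a x y, T.lactL a (m x y) = m (W.lactL a x) y
  dense : closure (Submodule.span ℂ {z : T.X | ∃ x y, z = m x y} : Set T.X) = Set.univ

variable {B : Type u} [NonUnitalCStarAlgebra B]

/-- `π : A → B` is a *-homomorphism (stated elementwise) -/
structure IsStarHom (π : A → B) : Prop where
  map_add : ∀ a b, π (a + b) = π a + π b
  map_mul : ∀ a b, π (a * b) = π a * π b
  map_star : ∀ a, π (star a) = star (π a)
  map_smul : ∀ (c : ℂ) a, π (c • a) = c • π a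

/-- `(π, t)` is a representation (Toeplitz representation) of the
correspondence `W` in the C*-algebra `B`. -/
structure IsRep (W : Corr A) (π : A → B) (t : W.X → B) : Prop where
  hom : IsStarHom π
  t_add : ∀ x y, t (x + y) = t x + t y
  t_smul : ∀ (c : ℂ) x, t (c • x) = c • t x
  lact : ∀ a x, t (W.lactL a x) = π a * t x
  ract : ∀ x a, t (W.ract x a) = t x * π a
  inner : ∀ x y, star (t x) * t y = π (W.inner x y)

/-- Cuntz–Pimsner covariance of a representation of a *regular*
correspondence: whenever `φ(a)` is approximated in norm by finite sums of
rank-one operators `θ_{x,y}`, `π(a)` is approximated by the corresponding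
sums `t(x) t(y)*`.  (For regular correspondences this is equivalent to
`π = t⁽¹⁾ ∘ φ`.) -/
def CPCov (W : Corr A) (π : A → B) (t : W.X → B) : Prop :=
  ∀ (a : A) (N : ℕ → ℕ) (x y : ∀ n, Fin (N n) → W.X),
    Tendsto (fun n => ∑ r, W.rankOne (x n r) (y n r)) atTop (𝓝 (W.lactL a)) →
    Tendsto (fun n => ∑ r, t (x n r) * star (t (y n r))) atTop (𝓝 (π a))

/-- The Cuntz–Pimsner algebra of a correspondence `W`: a C*-algebra `O`
together with a universal covariant representation `(π, t)`:  `(π,t)` is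
covariant, `π` is injective, `O` is generated by the images of `π` and `t`,
and every covariant representation factors uniquely through `O`. -/
structure CPAlg (W : Corr A) : Type (u + 1) where
  O : Type u
  [alg : NonUnitalCStarAlgebra O]
  π : A → O
  t : W.X → O
  isRep : IsRep W π t
  covariant : CPCov W π t
  inj : Function.Injective π
  gen : ∀ S : Set O, IsClosed S →
    (∀ a, π a ∈ S) → (∀ x, t x ∈ S) →
    (∀ p q, p ∈ S → q ∈ S → p + q ∈ S) →
    (∀ p q, p ∈ S → q ∈ S → p * q ∈ S) →
    (∀ (c : ℂ) p, p ∈ S → c • p ∈ S) →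
    (∀ p, p ∈ S → star p ∈ S) → ∀ z, z ∈ S
  universal : ∀ (C : Type u) [NonUnitalCStarAlgebra C],
    ∀ (π' : A → C) (t' : W.X → C), IsRep W π' t' → CPCov W π' t' →
      ∃! h : O →⋆ₙₐ[ℂ] C, (∀ a, h (π a) = π' a) ∧ ∀ x, h (t x) = t' x

attribute [instance] CPAlg.alg

/- ##################  product systems over ℕ^k  ################## -/

/-- the `i`-th standard generator of `ℕ^k` -/
def egen {k : ℕ} (i : Fin k) : Fin k → ℕ := Pi.single i 1

/-- A product system over `ℕ^k` of (nondegenerate regular) correspondences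
over `A`:  fibers `fib s`, an associative multiplication implementing
isomorphisms `fib s ⊗_A fib t ≅ fib (s+t)`, and `fib 0 = A` (witnessed by
the unit map). -/
structure PSys (A : Type u) [NonUnitalCStarAlgebra A] (k : ℕ) : Type (u + 1) where
  fib : (Fin k → ℕ) → Corr A
  reg : ∀ s, (fib s).Reg
  mul : ∀ s t, (fib s).X → (fib t).X → (fib (s + t)).X
  isTensor : ∀ s t, IsTensor (fib s) (fib t) (fib (s + t)) (mul s t)
  assoc : ∀ s t u x y z,
    HEq (mul (s + t) u (mul s t x y) z) (mul s (t + u) x (mul t u y z))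
  unit : A → (fib 0).X
  unit_bij : Function.Bijective unit
  unit_add : ∀ a b, unit (a + b) = unit a + unit b
  unit_smul : ∀ (c : ℂ) a, unit (c • a) = c • unit a
  unit_inner : ∀ a b, (fib 0).inner (unit a) (unit b) = star a * b
  unit_lact : ∀ a b, (fib 0).lactL a (unit b) = unit (a * b)
  unit_ract : ∀ a b, (fib 0).ract (unit a) b = unit (a * b)
  unit_mul_left : ∀ s a x, HEq (mul 0 s (unit a) x) ((fib s).lactL a x)
  unit_mul_right : ∀ s x a, HEq (mul s 0 x (unit a)) ((fib s).ract x a)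

/-- a representation of a product system in a C*-algebra `B` -/
structure PSRep {k : ℕ} (Xs : PSys A k) (B : Type u) [NonUnitalCStarAlgebra B] :
    Type u where
  π : A → B
  ψ : ∀ s, (Xs.fib s).X → B
  isRep : ∀ s, IsRep (Xs.fib s) π (ψ s)
  ψ_zero : ∀ a, ψ 0 (Xs.unit a) = π a
  mul : ∀ s t x y, ψ s x * ψ t y = ψ (s + t) (Xs.mul s t x y)

/-- Cuntz–Pimsner covariance of a representation of a product system -/
def PSCPCov {k : ℕ} {Xs : PSys A k} {B : Type u} [NonUnitalCStarAlgebra B]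
    (r : PSRep Xs B) : Prop :=
  ∀ s, CPCov (Xs.fib s) r.π (r.ψ s)

/-- The Cuntz–Pimsner algebra `𝒪(X)` of a product system. -/
structure PSCPAlg {k : ℕ} (Xs : PSys A k) : Type (u + 1) where
  O : Type u
  [alg : NonUnitalCStarAlgebra O]
  rep : PSRep Xs O
  covariant : PSCPCov rep
  inj : Function.Injective rep.π
  gen : ∀ S : Set O, IsClosed S →
    (∀ a, rep.π a ∈ S) → (∀ s x, rep.ψ s x ∈ S) →
    (∀ p q, p ∈ S → q ∈ S → p + q ∈ S) →
    (∀ p q, p ∈ S → q ∈ S → p * q ∈ S) →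
    (∀ (c : ℂ) p, p ∈ S → c • p ∈ S) →
    (∀ p, p ∈ S → star p ∈ S) → ∀ z, z ∈ S
  universal : ∀ (C : Type u) [NonUnitalCStarAlgebra C],
    ∀ r : PSRep Xs C, PSCPCov r →
      ∃! h : O →⋆ₙₐ[ℂ] C,
        (∀ a, h (rep.π a) = r.π a) ∧ ∀ s x, h (rep.ψ s x) = r.ψ s x

attribute [instance] PSCPAlg.alg

/- ##################  generating systems  ################## -/

/-- a realization of a triple tensor product `W1 ⊗ W2 ⊗ W3` carrying both
a left pairing `(W1 ⊗ W2) ⊗ W3` and a right pairing `W1 ⊗ (W2 ⊗ W3)` -/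
structure Trip (W1 W2 W3 : Corr A) (T12 : Corr A) (m12 : W1.X → W2.X → T12.X)
    (T23 : Corr A) (m23 : W2.X → W3.X → T23.X) (P : Corr A) : Type u where
  lp : T12.X → W3.X → P.X
  rp : W1.X → T23.X → P.X
  lt : IsTensor T12 W3 P lp
  rt : IsTensor W1 T23 P rp
  compat : ∀ x y z, lp (m12 x y) z = rp x (m23 y z)

/-- the hexagonal relation for a triple of flip isomorphisms
`θij, θil, θjl`, stated relative to arbitrary realizations of the six
triple tensor products. -/
def HexProp (Yi Yj Yl : Corr A)
    (Tij Tji Til Tli Tjl Tlj : Corr A)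
    (mij : Yi.X → Yj.X → Tij.X) (mji : Yj.X → Yi.X → Tji.X)
    (mil : Yi.X → Yl.X → Til.X) (mli : Yl.X → Yi.X → Tli.X)
    (mjl : Yj.X → Yl.X → Tjl.X) (mlj : Yl.X → Yj.X → Tlj.X)
    (θij : Tij.X → Tji.X) (θil : Til.X → Tli.X) (θjl : Tjl.X → Tlj.X) : Prop :=
  ∀ (P1 P2 P3 P4 P5 P6 : Corr A)
    (R1 : Trip Yi Yj Yl Tij mij Tjl mjl P1)
    (R2 : Trip Yj Yi Yl Tji mji Til mil P2)
    (R3 : Trip Yj Yl Yi Tjl mjl Tli mli P3)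
    (R4 : Trip Yl Yj Yi Tlj mlj Tji mji P4)
    (R5 : Trip Yi Yl Yj Til mil Tlj mlj P5)
    (R6 : Trip Yl Yi Yj Tli mli Tij mij P6)
    (F1 : P1.X → P2.X) (F2 : P2.X → P3.X) (F3 : P3.X → P4.X)
    (F4 : P1.X → P5.X) (F5 : P5.X → P6.X) (F6 : P6.X → P4.X),
    IsCLMap F1 → IsCLMap F2 → IsCLMap F3 →
    IsCLMap F4 → IsCLMap F5 → IsCLMap F6 →
    (∀ u z, F1 (R1.lp u z) = R2.lp (θij u) z) →
    (∀ y v, F2 (R2.rp y v) = R3.rp y (θil v)) →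
    (∀ u z, F3 (R3.lp u z) = R4.lp (θjl u) z) →
    (∀ x v, F4 (R1.rp x v) = R5.rp x (θjl v)) →
    (∀ u z, F5 (R5.lp u z) = R6.lp (θil u) z) →
    (∀ x v, F6 (R6.rp x v) = R4.rp x (θij v)) →
    ∀ w, F3 (F2 (F1 w)) = F6 (F5 (F4 w))

/-- A generating system `(Y, θ)` of `k` correspondences over `A`:
correspondences `Y i`, chosen realizations `T i j` of the tensor products
`Y i ⊗_A Y j`, and flip isomorphisms `θ i j : Y i ⊗ Y j → Y j ⊗ Y i` with
`θ i i = id`, `θ j i = (θ i j)⁻¹`, satisfying the hexagonal relations. -/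
structure GenSys (A : Type u) [NonUnitalCStarAlgebra A] (k : ℕ) : Type (u + 1) where
  Y : Fin k → Corr A
  reg : ∀ i, (Y i).Reg
  T : Fin k → Fin k → Corr A
  tmul : ∀ i j, (Y i).X → (Y j).X → (T i j).X
  isTensor : ∀ i j, IsTensor (Y i) (Y j) (T i j) (tmul i j)
  θ : ∀ i j, CorrIso (T i j) (T j i)
  θ_diag : ∀ i x y, (θ i i).toFun (tmul i i x y) = tmul i i x y
  θ_symm : ∀ i j z, (θ j i).toFun ((θ i j).toFun z) = z
  hex : ∀ i j l, HexProp (Y i) (Y j) (Y l) (T i j) (T j i) (T i l) (T l i)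
    (T j l) (T l j) (tmul i j) (tmul j i) (tmul i l) (tmul l i) (tmul j l)
    (tmul l j) ((θ i j).toFun) ((θ i l).toFun) ((θ j l).toFun)

/-- the generating system obtained by keeping only `Y 1, …, Y m` -/
def GenSys.restrict {k : ℕ} (G : GenSys A k) (m : ℕ) (h : m ≤ k) : GenSys A m where
  Y i := G.Y (Fin.castLE h i)
  reg i := G.reg _
  T i j := G.T (Fin.castLE h i) (Fin.castLE h j)
  tmul i j := G.tmul _ _
  isTensor i j := G.isTensor _ _
  θ i j := G.θ _ _
  θ_diag i := G.θ_diag _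
  θ_symm i j := G.θ_symm _ _
  hex i j l := G.hex _ _ _

/-- `X` is *the* product system (over `ℕ^k`) generated by the generating
system `G` (Fowler–Sims); witnessed by compatible isomorphisms on the
generating fibers. -/
structure Generates {k : ℕ} (G : GenSys A k) (Xs : PSys A k) : Type u where
  ι : ∀ i, CorrIso (G.Y i) (Xs.fib (egen i))
  κ : ∀ i j, CorrIso (G.T i j) (Xs.fib (egen i + egen j))
  κ_mul : ∀ i j x y,
    (κ i j).toFun (G.tmul i j x y) =
      Xs.mul (egen i) (egen j) ((ι i).toFun x) ((ι j).toFun y)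
  θ_compat : ∀ i j z,
    HEq ((κ j i).toFun ((G.θ i j).toFun z)) ((κ i j).toFun z)

/- ############  mixed tensor products `W ⊗_A O` and `W ⊗_A V`  ############ -/

/-- `Z` (a correspondence over the C*-algebra `O`), with map `m`, is a
realization of the right Hilbert `O`-module `W ⊗_A O`, where `O` is an
`A`-algebra via `πA`.  (No condition on the left action of `O` on `Z`.) -/
structure MixedMod (W : Corr A) (O : Type u) [NonUnitalCStarAlgebra O]
    (πA : A → O) (Z : Corr O) (m : W.X → O → Z.X) : Prop where
  add_left : ∀ x x' S, m (x + x') S = m x S + m x' S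
  add_right : ∀ x S S', m x (S + S') = m x S + m x S'
  smul_left : ∀ (c : ℂ) x S, m (c • x) S = c • m x S
  smul_right : ∀ (c : ℂ) x S, m x (c • S) = c • m x S
  balanced : ∀ x a S, m (W.ract x a) S = m x (πA a * S)
  ract : ∀ x S T, Z.ract (m x S) T = m x (S * T)
  inner : ∀ x S y T, Z.inner (m x S) (m y T) = star S * (πA (W.inner x y) * T)
  dense : closure (Submodule.span ℂ {z : Z.X | ∃ x S, z = m x S} : Set Z.X) = Set.univ

/-- `P`, with pairing `p`, is a realization of the balanced tensor product
`W ⊗_A V` where `W` is a correspondence over `A` and `V` a correspondence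
over the `A`-algebra `O` (via `πA`); the left `A`-action is `πA`-compatible. -/
structure MixedPair (W : Corr A) {O : Type u} [NonUnitalCStarAlgebra O]
    (πA : A → O) (V P : Corr O) (p : W.X → V.X → P.X) : Prop where
  add_left : ∀ x x' v, p (x + x') v = p x v + p x' v
  add_right : ∀ x v v', p x (v + v') = p x v + p x v'
  smul_left : ∀ (c : ℂ) x v, p (c • x) v = c • p x v
  smul_right : ∀ (c : ℂ) x v, p x (c • v) = c • p x v
  balanced : ∀ x a v, p (W.ract x a) v = p x (V.lactL (πA a) v)
  inner : ∀ x v x' v',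
    P.inner (p x v) (p x' v') = V.inner v (V.lactL (πA (W.inner x x')) v')
  ract : ∀ x v S, P.ract (p x v) S = p x (V.ract v S)
  lact_pi : ∀ a x v, P.lactL (πA a) (p x v) = p (W.lactL a x) v
  dense : closure (Submodule.span ℂ {z : P.X | ∃ x v, z = p x v} : Set P.X) = Set.univ

/- ############  the correspondence `ℰYᵢ = Yᵢ ⊗_A 𝒪(Y₁)`  ############ -/

/-- `Z = Yi ⊗_A 𝒪(Y1)` with the left `𝒪(Y1)`-action determined by the flip
`θ : Y1 ⊗ Yi → Yi ⊗ Y1` (`T` and `T'` are realizations of these tensor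
products):  `π(a)` acts by `φ(a) ⊗ 1`, and `t(x)·(y ⊗ S) = (1 ⊗ V)(θ ⊗ 1)
(x ⊗ y ⊗ S)`. -/
structure ECorrData (Y1 Yi : Corr A)
    (T : Corr A) (mT : Y1.X → Yi.X → T.X)
    (T' : Corr A) (mT' : Yi.X → Y1.X → T'.X)
    (θ : T.X → T'.X)
    (C : CPAlg Y1) (Z : Corr C.O) (m : Yi.X → C.O → Z.X) : Prop where
  mod : MixedMod Yi C.O C.π Z m
  lact_pi : ∀ a y S, Z.lactL (C.π a) (m y S) = m (Yi.lactL a y) S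
  lact_t : ∃ μ : T'.X → C.O → Z.X,
    (∀ S, IsCLMap fun u => μ u S) ∧
    (∀ y u S, μ (mT' y u) S = m y (C.t u * S)) ∧
    ∀ x y S, Z.lactL (C.t x) (m y S) = μ (θ (mT x y)) S

/-- `Z = Yi ⊗_A 𝒪(Y p)` for a generating system `G`, with left action
determined by `θ p i` -/
def ECorr {k : ℕ} (G : GenSys A k) (p i : Fin k) (C : CPAlg (G.Y p))
    (Z : Corr C.O) (m : (G.Y i).X → C.O → Z.X) : Prop :=
  ECorrData (G.Y p) (G.Y i) (G.T p i) (G.tmul p i) (G.T i p) (G.tmul i p)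
    ((G.θ p i).toFun) C Z m

/-- `Z = Y j ⊗_A 𝒪(Y 1 ∗ ⋯ ∗ Y m)` with the left action of the
Cuntz–Pimsner algebra of the product system determined on the generators
`σ i = ψ_{e i}` via the flips `θ i j` and the absorption maps. -/
structure EPCorr {k : ℕ} (G : GenSys A k) {m : ℕ} (hm : m ≤ k)
    (Xs : PSys A m) (gen : Generates (G.restrict m hm) Xs) (C : PSCPAlg Xs)
    (j : Fin k) (Z : Corr C.O) (mm : (G.Y j).X → C.O → Z.X) : Prop where
  mod : MixedMod (G.Y j) C.O C.rep.π Z mm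
  lact_pi : ∀ a y S, Z.lactL (C.rep.π a) (mm y S) = mm ((G.Y j).lactL a y) S
  lact_t : ∀ i : Fin m,
    ∃ μ : (G.T j (Fin.castLE hm i)).X → C.O → Z.X,
      (∀ S, IsCLMap fun u => μ u S) ∧
      (∀ y u S, μ (G.tmul j (Fin.castLE hm i) y u) S =
        mm y (C.rep.ψ (egen i) ((gen.ι i).toFun u) * S)) ∧
      ∀ x y S, Z.lactL (C.rep.ψ (egen i) ((gen.ι i).toFun x)) (mm y S) =
        μ ((G.θ (Fin.castLE hm i) j).toFun (G.tmul (Fin.castLE hm i) j x y)) S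

/- ############  the isomorphism `ℛθ = ν⁻¹ (θ ⊗ 1) ν`  ############ -/

/-- Witness data expressing that `R : Zi ⊗_O Zj → Zj ⊗_O Zi` is the map
`ℛθ_{ij} = ν_{ji}⁻¹ (θ_{ij} ⊗ 1_O) ν_{ij}` of the paper, where
`Zi = Yi ⊗_A O`, `O = 𝒪(Y1)`, and `ν_{ij} : (Yi ⊗ O) ⊗_O (Yj ⊗ O) ≅
Yi ⊗ Yj ⊗ O` is the canonical absorption isomorphism. -/
structure RTheta (O : Type u) [NonUnitalCStarAlgebra O] (πA : A → O)
    (Yi Yj : Corr A) (Tij Tji : Corr A)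
    (mij : Yi.X → Yj.X → Tij.X) (mji : Yj.X → Yi.X → Tji.X)
    (θij : Tij.X → Tji.X)
    (Zi Zj : Corr O) (mmi : Yi.X → O → Zi.X) (mmj : Yj.X → O → Zj.X)
    (TZ TZr : Corr O) (mZ : Zi.X → Zj.X → TZ.X) (mZr : Zj.X → Zi.X → TZr.X)
    (R : TZ.X → TZr.X) : Type (u + 1) where
  Pl : Corr O
  Pr : Corr O
  pij : Yi.X → Zj.X → Pl.X
  pji : Yj.X → Zi.X → Pr.X
  hp : MixedPair Yi πA Zj Pl pij
  hpr : MixedPair Yj πA Zi Pr pji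
  q : Tij.X → O → Pl.X
  qr : Tji.X → O → Pr.X
  hq : MixedMod Tij O πA Pl q
  hqr : MixedMod Tji O πA Pr qr
  q_compat : ∀ x y S, q (mij x y) S = pij x (mmj y S)
  q_compatr : ∀ y x S, qr (mji y x) S = pji y (mmi x S)
  ν : TZ.X → Pl.X
  νr : TZr.X → Pr.X
  hν : IsCLMap ν ∧ Function.Bijective ν ∧
    ∀ x S ζ, ν (mZ (mmi x S) ζ) = pij x (Zj.lactL S ζ)
  hνr : IsCLMap νr ∧ Function.Bijective νr ∧
    ∀ y S ζ, νr (mZr (mmj y S) ζ) = pji y (Zi.lactL S ζ)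
  Θ : Pl.X → Pr.X
  hΘ : IsCLMap Θ ∧ ∀ u S, Θ (q u S) = qr (θij u) S
  hR : ∀ z, νr (R z) = Θ (ν z)

/-- the gauge action of `𝕋` on the Cuntz–Pimsner algebra of a correspondence -/
def IsGaugeAut {A : Type u} [NonUnitalCStarAlgebra A] {W : Corr A}
    (C : CPAlg W) (γ : ℂ → C.O → C.O) : Prop :=
  ∀ z : ℂ, ‖z‖ = 1 →
    IsStarHom (γ z) ∧ Function.Bijective (γ z) ∧
      (∀ x, γ z (C.t x) = z • C.t x) ∧ ∀ a, γ z (C.π a) = C.π a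


/- ############################################################
   Auxiliary lemmas for the proof of Statement 16.
   ############################################################ -/

section AuxGauge

open scoped ENNReal NNReal

variable {A : Type u} [NonUnitalCStarAlgebra A]

namespace Corr

variable (W : Corr A)

lemma inner_zero_right' (x : W.X) : W.inner x 0 = 0 := by
  have h := W.inner_smul_right 0 x 0
  simpa using h

lemma inner_zero_left' (y : W.X) : W.inner 0 y = 0 := by
  rw [← W.inner_star, W.inner_zero_right', star_zero]

lemma inner_add_left' (x y z : W.X) :
    W.inner (x + y) z = W.inner x z + W.inner y z := by
  rw [← W.inner_star, W.inner_add_right, star_add, W.inner_star, W.inner_star]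

lemma inner_smul_left' (c : ℂ) (x y : W.X) :
    W.inner (c • x) y = star c • W.inner x y := by
  rw [← W.inner_star, W.inner_smul_right, star_smul, W.inner_star]

lemma inner_neg_left' (x y : W.X) : W.inner (-x) y = - W.inner x y := by
  have h := W.inner_smul_left' (-1) x y
  simpa using h

lemma inner_neg_right' (x y : W.X) : W.inner x (-y) = - W.inner x y := by
  have h := W.inner_smul_right (-1) x y
  simpa using h

lemma inner_sub_left' (x y z : W.X) :
    W.inner (x - y) z = W.inner x z - W.inner y z := by
  rw [sub_eq_add_neg, W.inner_add_left', W.inner_neg_left', ← sub_eq_add_neg]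

lemma inner_sub_right' (x y z : W.X) :
    W.inner x (y - z) = W.inner x y - W.inner x z := by
  rw [sub_eq_add_neg, W.inner_add_right, W.inner_neg_right', ← sub_eq_add_neg]

lemma eq_zero_of_inner_self (u : W.X) (h : W.inner u u = 0) : u = 0 := by
  have h2 := W.norm_eq u
  rw [h, norm_zero] at h2
  have h3 : ‖u‖ = 0 := by
    have := pow_eq_zero_iff (n := 2) (by norm_num) |>.mp h2
    exact this
  exact norm_eq_zero.mp h3

lemma norm_inner_le' (x y : W.X) : ‖W.inner x y‖ ≤ 3 * (‖x‖ + ‖y‖) ^ 2 := by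
  set a := W.inner x y with ha
  set b := W.inner y x with hb
  have e1 : W.inner (x + y) (x + y) = W.inner x x + W.inner y y + (a + b) := by
    rw [W.inner_add_right, W.inner_add_left', W.inner_add_left']
    abel
  have e2 : W.inner (x + Complex.I • y) (x + Complex.I • y)
      = W.inner x x + W.inner y y + (Complex.I • a - Complex.I • b) := by
    rw [W.inner_add_right, W.inner_add_left', W.inner_add_left',
        W.inner_smul_right, W.inner_smul_left', W.inner_smul_left', W.inner_smul_right]
    simp only [Complex.star_def, Complex.conj_I, smul_smul, neg_mul, Complex.I_mul_I,
      neg_neg, one_smul, neg_smul]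
    abel
  have hsum : W.inner (x + y) (x + y) - W.inner x x - W.inner y y
      - Complex.I • (W.inner (x + Complex.I • y) (x + Complex.I • y)
          - W.inner x x - W.inner y y) = a + a := by
    rw [e1, e2]
    have h2 : Complex.I • (Complex.I • a - Complex.I • b) = b - a := by
      simp only [smul_sub, smul_smul, Complex.I_mul_I, neg_smul, one_smul]
      abel
    have h3 : W.inner x x + W.inner y y + (Complex.I • a - Complex.I • b)
        - W.inner x x - W.inner y y = Complex.I • a - Complex.I • b := by abel
    rw [h3, h2]
    abel
  have h2a : ‖a + a‖ = 2 * ‖a‖ := by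
    rw [← two_smul ℂ a, norm_smul]
    norm_num
  set s := ‖x‖ + ‖y‖ with hs
  have hs0 : 0 ≤ s := by positivity
  have hb1 : ‖W.inner (x + y) (x + y)‖ ≤ s ^ 2 := by
    rw [← W.norm_eq]
    have : ‖x + y‖ ≤ s := norm_add_le x y
    exact pow_le_pow_left₀ (norm_nonneg _) this 2
  have hb2 : ‖W.inner x x‖ ≤ s ^ 2 := by
    rw [← W.norm_eq]
    have : ‖x‖ ≤ s := by rw [hs]; nlinarith [norm_nonneg y]
    exact pow_le_pow_left₀ (norm_nonneg _) this 2
  have hb3 : ‖W.inner y y‖ ≤ s ^ 2 := by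
    rw [← W.norm_eq]
    have : ‖y‖ ≤ s := by rw [hs]; nlinarith [norm_nonneg x]
    exact pow_le_pow_left₀ (norm_nonneg _) this 2
  have hb4 : ‖W.inner (x + Complex.I • y) (x + Complex.I • y)‖ ≤ s ^ 2 := by
    rw [← W.norm_eq]
    have h5 : ‖x + Complex.I • y‖ ≤ s := by
      refine le_trans (norm_add_le _ _) ?_
      rw [norm_smul, Complex.norm_I, one_mul]
    exact pow_le_pow_left₀ (norm_nonneg _) h5 2
  have key : 2 * ‖a‖ ≤ 6 * s ^ 2 := by
    rw [← h2a, ← hsum]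
    have t1 : ‖W.inner (x + y) (x + y) - W.inner x x - W.inner y y‖ ≤ 3 * s ^ 2 := by
      refine le_trans (norm_sub_le _ _) ?_
      have := norm_sub_le (W.inner (x + y) (x + y)) (W.inner x x)
      linarith
    have t2 : ‖Complex.I • (W.inner (x + Complex.I • y) (x + Complex.I • y)
        - W.inner x x - W.inner y y)‖ ≤ 3 * s ^ 2 := by
      rw [norm_smul, Complex.norm_I, one_mul]
      refine le_trans (norm_sub_le _ _) ?_
      have := norm_sub_le (W.inner (x + Complex.I • y) (x + Complex.I • y)) (W.inner x x)
      linarith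
    refine le_trans (norm_sub_le _ _) ?_
    linarith
  linarith

lemma norm_inner_le_right' (x y : W.X) :
    ‖W.inner x y‖ ≤ (3 * (‖x‖ + 1) ^ 2) * ‖y‖ := by
  by_cases hy : y = 0
  · rw [hy, W.inner_zero_right', norm_zero, norm_zero, mul_zero]
  · set t : ℝ := ‖y‖ with hts
    have ht : 0 < t := norm_pos_iff.mpr hy
    have htc : (t : ℂ) ≠ 0 := by
      simpa using ht.ne'
    have hyy : y = (t : ℂ) • ((t : ℂ)⁻¹ • y) := by
      rw [smul_smul, mul_inv_cancel₀ htc, one_smul]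
    have hnorm1 : ‖(t : ℂ)⁻¹ • y‖ = 1 := by
      rw [norm_smul, norm_inv, Complex.norm_real]
      rw [Real.norm_eq_abs, abs_of_pos ht]
      field_simp
      exact hts.symm
    calc ‖W.inner x y‖ = ‖(t:ℂ) • W.inner x ((t:ℂ)⁻¹ • y)‖ := by
          rw [← W.inner_smul_right, ← hyy]
      _ = t * ‖W.inner x ((t:ℂ)⁻¹ • y)‖ := by
          rw [norm_smul, Complex.norm_real, Real.norm_eq_abs, abs_of_pos ht]
      _ ≤ t * (3 * (‖x‖ + ‖(t:ℂ)⁻¹ • y‖) ^ 2) := by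
          exact mul_le_mul_of_nonneg_left (W.norm_inner_le' _ _) ht.le
      _ = (3 * (‖x‖ + 1) ^ 2) * t := by rw [hnorm1]; ring

lemma norm_inner_le_left' (x y : W.X) :
    ‖W.inner x y‖ ≤ (3 * (‖y‖ + 1) ^ 2) * ‖x‖ := by
  rw [← W.inner_star, norm_star]
  exact W.norm_inner_le_right' y x

lemma lact_zero' : W.lactL 0 = 0 := by
  have h := W.lact_smul 0 0
  simpa using h

end Corr

/-- continuity of an additive map with a linear bound -/
lemma continuous_of_additive_bound {E F : Type*} [SeminormedAddCommGroup E]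
    [SeminormedAddCommGroup F] (f : E → F) (hadd : ∀ x y, f (x + y) = f x + f y)
    (C : ℝ) (hb : ∀ x, ‖f x‖ ≤ C * ‖x‖) : Continuous f :=
  AddMonoidHomClass.continuous_of_bound (AddMonoidHom.mk' f hadd) C hb

/-- pointwise norm bound for the left action of a `Corr` -/
lemma Corr.lact_bound (W : Corr A) (ξ : W.X) :
    ∃ K : ℝ, 0 ≤ K ∧ ∀ T : A, ‖W.lactL T ξ‖ ≤ K * ‖T‖ := by
  classical
  set Kin : ℝ := 3 * (‖ξ‖ + 1) ^ 2 with hKin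
  have hKin1 : 1 ≤ Kin := by nlinarith [norm_nonneg ξ]
  have hKin0 : 0 < Kin := lt_of_lt_of_le one_pos hKin1
  have hib : ∀ ζ : W.X, ‖W.inner ξ ζ‖ ≤ Kin * ‖ζ‖ := fun ζ => W.norm_inner_le_right' ξ ζ
  set f : A → ℝ := fun T => ‖W.lactL T ξ‖ with hf
  have hf0 : ∀ T, 0 ≤ f T := fun T => norm_nonneg _
  have step : ∀ T, f T ^ 2 ≤ Kin * f (star T * T) := by
    intro T
    have h1 : f T ^ 2 = ‖W.inner (W.lactL T ξ) (W.lactL T ξ)‖ := W.norm_eq _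
    have h2 : W.inner (W.lactL T ξ) (W.lactL T ξ) = W.inner ξ (W.lactL (star T * T) ξ) := by
      rw [W.lact_adjoint]
      congr 1
      rw [W.lact_mul]
      rfl
    rw [h1, h2]
    exact hib _
  -- the left action as a non-unital algebra homomorphism into operators
  set ψ : A →ₙₐ[ℂ] (W.X →L[ℂ] W.X) :=
    { toFun := W.lactL
      map_add' := W.lact_add
      map_zero' := W.lact_zero'
      map_smul' := W.lact_smul
      map_mul' := fun a b => by
        show W.lactL (a * b) = W.lactL a * W.lactL b
        rw [W.lact_mul]
        rfl }
    with hψ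
  have hψS : ∀ S : A, (Unitization.lift ψ) (S : Unitization ℂ A) = W.lactL S := by
    intro S; simp [hψ]
  have rad : ∀ S : A, IsSelfAdjoint S →
      spectralRadius ℂ (W.lactL S) ≤ (‖S‖₊ : ℝ≥0∞) := by
    intro S hS
    have hsa : IsSelfAdjoint ((S : Unitization ℂ A)) := by
      rw [IsSelfAdjoint, ← Unitization.inr_star, hS]
    calc spectralRadius ℂ (W.lactL S)
        = spectralRadius ℂ ((Unitization.lift ψ) (S : Unitization ℂ A)) := by rw [hψS]
      _ ≤ spectralRadius ℂ ((S : Unitization ℂ A)) :=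
          iSup_le_iSup_of_subset (AlgHom.spectrum_apply_subset _ _)
      _ = ((‖(S : Unitization ℂ A)‖₊ : ℝ≥0∞)) := hsa.spectralRadius_eq_nnnorm
      _ = (‖S‖₊ : ℝ≥0∞) := by rw [Unitization.nnnorm_inr]
  have gelf : ∀ S : A, IsSelfAdjoint S → ∀ ε : ℝ, 0 < ε →
      ∃ k : ℕ, ‖(W.lactL S) ^ (2 ^ k)‖ ≤ (‖S‖ + ε) ^ (2 ^ k) := by
    intro S hS ε hε
    set B := W.lactL S with hB
    have hgel := spectrum.pow_nnnorm_pow_one_div_tendsto_nhds_spectralRadius B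
    have hcomp := hgel.comp (tendsto_pow_atTop_atTop_of_one_lt (α := ℕ) (one_lt_two))
    set y : ℝ≥0 := ‖S‖₊ + ε.toNNReal with hy
    have hlt : spectralRadius ℂ B < (y : ℝ≥0∞) := by
      refine lt_of_le_of_lt (rad S hS) ?_
      rw [ENNReal.coe_lt_coe, hy]
      exact lt_add_of_pos_right _ (Real.toNNReal_pos.mpr hε)
    have hev := hcomp.eventually_lt_const hlt
    obtain ⟨k, hk⟩ := hev.exists
    simp only [Function.comp_apply] at hk
    set n : ℕ := 2 ^ k with hn
    have hnne : ((n : ℝ)) ≠ 0 := by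
      rw [hn]
      positivity
    have hxle : ((‖B ^ n‖₊ : ℝ≥0∞)) ≤ ((y ^ n : ℝ≥0) : ℝ≥0∞) := by
      have h1 : (((‖B ^ n‖₊ : ℝ≥0∞)) ^ ((1 : ℝ)/(n : ℝ))) ^ (n : ℝ)
          ≤ ((y : ℝ≥0∞)) ^ (n : ℝ) :=
        ENNReal.rpow_le_rpow hk.le (Nat.cast_nonneg n)
      have h2 : (((‖B ^ n‖₊ : ℝ≥0∞)) ^ ((1 : ℝ)/(n : ℝ))) ^ (n : ℝ)
          = ((‖B ^ n‖₊ : ℝ≥0∞)) := by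
        rw [← ENNReal.rpow_mul, one_div, inv_mul_cancel₀ hnne, ENNReal.rpow_one]
      rw [h2] at h1
      calc ((‖B ^ n‖₊ : ℝ≥0∞)) ≤ ((y : ℝ≥0∞)) ^ (n : ℝ) := h1
        _ = ((y ^ n : ℝ≥0) : ℝ≥0∞) := by rw [ENNReal.rpow_natCast, ENNReal.coe_pow]
    refine ⟨k, ?_⟩
    have h3 : ‖B ^ n‖₊ ≤ y ^ n := ENNReal.coe_le_coe.mp hxle
    have h4 : (‖B ^ n‖ : ℝ) ≤ ((y ^ n : ℝ≥0) : ℝ) := h3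
    rw [hy] at h4
    push_cast at h4
    rw [Real.coe_toNNReal _ hε.le] at h4
    exact h4
  -- iteration for self-adjoint elements
  have iter : ∀ S : A, star S = S → ∀ m : ℕ,
      ∃ Sm : A, star Sm = Sm ∧ W.lactL Sm = (W.lactL S) ^ (2 ^ m) ∧
        f S ^ (2 ^ m) ≤ Kin ^ (2 ^ m - 1) * f Sm := by
    intro S hS m
    induction m with
    | zero =>
        refine ⟨S, hS, by simp [pow_one], ?_⟩
        simp
    | succ m ih =>
        obtain ⟨Sm, h1, h2, h3⟩ := ih
        refine ⟨Sm * Sm, by rw [star_mul, h1], ?_, ?_⟩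
        · rw [W.lact_mul]
          have : (2 : ℕ) ^ (m + 1) = 2 ^ m + 2 ^ m := by ring
          rw [this, pow_add, ← h2]
          rfl
        · have e1 : (2 : ℕ) ^ (m + 1) = 2 ^ m * 2 := by ring
          rw [e1, pow_mul]
          calc (f S ^ 2 ^ m) ^ 2 ≤ (Kin ^ (2 ^ m - 1) * f Sm) ^ 2 := by
                exact pow_le_pow_left₀ (by positivity) h3 2
            _ = Kin ^ ((2 ^ m - 1) * 2) * (f Sm ^ 2) := by rw [mul_pow, ← pow_mul]
            _ ≤ Kin ^ ((2 ^ m - 1) * 2) * (Kin * f (star Sm * Sm)) := by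
                refine mul_le_mul_of_nonneg_left ?_ (by positivity)
                exact step Sm
            _ = Kin ^ ((2 ^ m - 1) * 2 + 1) * f (Sm * Sm) := by
                rw [h1, pow_succ]
                ring
            _ = Kin ^ (2 ^ (m + 1) - 1) * f (Sm * Sm) := by
                have h4 : 1 ≤ (2 : ℕ) ^ m := Nat.one_le_two_pow
                have h5 : (2 : ℕ) ^ (m + 1) = 2 * 2 ^ m := by ring
                have h6 : (2 ^ m - 1) * 2 + 1 = 2 ^ (m + 1) - 1 := by omega
                rw [h6]
  set C0 : ℝ := max 1 ‖ξ‖ with hC0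
  have hC01 : 1 ≤ C0 := le_max_left _ _
  have hC0ξ : ‖ξ‖ ≤ C0 := le_max_right _ _
  have hC00 : 0 < C0 := lt_of_lt_of_le one_pos hC01
  have sa_bound : ∀ S : A, star S = S → f S ≤ (Kin * C0) * ‖S‖ := by
    intro S hS
    have key : ∀ ε : ℝ, 0 < ε → f S ≤ (Kin * C0) * (‖S‖ + ε) := by
      intro ε hε
      obtain ⟨k, hk⟩ := gelf S hS ε hε
      obtain ⟨Sk, h1, h2, h3⟩ := iter S hS k
      have h4 : f Sk ≤ ‖(W.lactL S) ^ (2 ^ k)‖ * ‖ξ‖ := by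
        rw [hf]
        calc ‖W.lactL Sk ξ‖ = ‖((W.lactL S) ^ (2 ^ k)) ξ‖ := by rw [h2]
          _ ≤ ‖(W.lactL S) ^ (2 ^ k)‖ * ‖ξ‖ := ContinuousLinearMap.le_opNorm _ _
      have h5 : f S ^ (2 ^ k) ≤ (Kin * C0 * (‖S‖ + ε)) ^ (2 ^ k) := by
        have hSε : (0:ℝ) ≤ ‖S‖ + ε := by positivity
        calc f S ^ (2 ^ k) ≤ Kin ^ (2 ^ k - 1) * f Sk := h3
          _ ≤ Kin ^ (2 ^ k - 1) * ((‖S‖ + ε) ^ (2 ^ k) * ‖ξ‖) := by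
              refine mul_le_mul_of_nonneg_left ?_ (by positivity)
              refine le_trans h4 ?_
              refine mul_le_mul_of_nonneg_right ?_ (norm_nonneg _)
              exact hk
          _ ≤ Kin ^ (2 ^ k) * ((‖S‖ + ε) ^ (2 ^ k) * C0 ^ (2 ^ k)) := by
              refine mul_le_mul ?_ ?_ (by positivity) (by positivity)
              · exact pow_le_pow_right₀ hKin1 (Nat.sub_le _ _)
              · refine mul_le_mul_of_nonneg_left ?_ (by positivity)
                exact le_trans hC0ξ (le_self_pow₀ hC01 (by positivity))
          _ = (Kin * C0 * (‖S‖ + ε)) ^ (2 ^ k) := by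
              have hsplit : (Kin * C0 * (‖S‖ + ε)) ^ (2 ^ k)
                  = Kin ^ (2 ^ k) * C0 ^ (2 ^ k) * (‖S‖ + ε) ^ (2 ^ k) := by
                rw [mul_pow, mul_pow]
              rw [hsplit]
              ring
      refine le_of_pow_le_pow_left₀ (by positivity) (by positivity) h5
    refine le_of_forall_pos_le_add ?_
    intro ε hε
    have hKC : 0 < Kin * C0 := by positivity
    have h6 := key (ε / (Kin * C0)) (by positivity)
    calc f S ≤ (Kin * C0) * (‖S‖ + ε / (Kin * C0)) := h6
      _ = (Kin * C0) * ‖S‖ + ε := by field_simp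
  refine ⟨Kin * C0, by positivity, ?_⟩
  intro T
  have h7 : f T ^ 2 ≤ (Kin * C0 * ‖T‖) ^ 2 := by
    have h8 : IsSelfAdjoint (star T * T) := IsSelfAdjoint.star_mul_self T
    calc f T ^ 2 ≤ Kin * f (star T * T) := step T
      _ ≤ Kin * ((Kin * C0) * ‖star T * T‖) := by
          refine mul_le_mul_of_nonneg_left (sa_bound _ h8) hKin0.le
      _ = Kin * ((Kin * C0) * (‖T‖ * ‖T‖)) := by rw [CStarRing.norm_star_mul_self]
      _ ≤ (Kin * C0 * ‖T‖) ^ 2 := by nlinarith [norm_nonneg T, hf0 T]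
  exact le_of_pow_le_pow_left₀ (by positivity) (by positivity) h7

/-- agreement of two continuous (semi)linear-ish maps on a dense span -/
lemma ext_on_dense {E F : Type*} [NormedAddCommGroup E] [NormedSpace ℂ E]
    [NormedAddCommGroup F] [NormedSpace ℂ F]
    (s : Set E) (hd : closure ((Submodule.span ℂ s : Submodule ℂ E) : Set E) = Set.univ)
    (f g : E → F) (hf : Continuous f) (hg : Continuous g)
    (hfa : ∀ x y, f (x + y) = f x + f y) (hga : ∀ x y, g (x + y) = g x + g y)
    (τ : ℂ → ℂ)
    (hfs : ∀ (c : ℂ) x, f (c • x) = τ c • f x) (hgs : ∀ (c : ℂ) x, g (c • x) = τ c • g x)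
    (hbase : ∀ x ∈ s, f x = g x) : ∀ x, f x = g x := by
  have hf0 : f 0 = 0 := by
    have h0 := hfa 0 0
    rw [add_zero] at h0
    exact (left_eq_add.mp h0)
  have hg0 : g 0 = 0 := by
    have h0 := hga 0 0
    rw [add_zero] at h0
    exact (left_eq_add.mp h0)
  have hspan : ∀ x ∈ Submodule.span ℂ s, f x = g x := by
    intro x hx
    induction hx using Submodule.span_induction with
    | mem x hx => exact hbase x hx
    | zero => rw [hf0, hg0]
    | add x y _ _ hx hy => rw [hfa, hga, hx, hy]
    | smul c x _ hx => rw [hfs, hgs, hx]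
  intro x
  have hsub : closure ((Submodule.span ℂ s : Submodule ℂ E) : Set E) ⊆ {y | f y = g y} :=
    closure_minimal (fun y hy => hspan y hy) (isClosed_eq hf hg)
  have hx : x ∈ closure ((Submodule.span ℂ s : Submodule ℂ E) : Set E) := by
    rw [hd]; trivial
  exact hsub hx

/-- Construction of `1 ⊗ g` on `Z = Y₂ ⊗ O` for an isometric automorphism-like `g`
fixing the coefficients. -/
lemma exists_psi (Y2 : Corr A) (O : Type u) [NonUnitalCStarAlgebra O]
    (πA : A → O) (Z : Corr O) (mm : Y2.X → O → Z.X)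
    (hmod : MixedMod Y2 O πA Z mm)
    (g : O → O)
    (hgadd : ∀ a b, g (a + b) = g a + g b)
    (hgsmul : ∀ (c : ℂ) a, g (c • a) = c • g a)
    (hgmul : ∀ a b, g (a * b) = g a * g b)
    (hgstar : ∀ a, g (star a) = star (g a))
    (hgπ : ∀ a, g (πA a) = πA a)
    (hgnorm : ∀ a, ‖g a‖ = ‖a‖) :
    ∃ Ψ : Z.X → Z.X, (∀ y S, Ψ (mm y S) = mm y (g S)) ∧
      (∀ x y, Ψ (x + y) = Ψ x + Ψ y) ∧ (∀ (c : ℂ) x, Ψ (c • x) = c • Ψ x) ∧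
      Isometry Ψ := by
  classical
  have hg0 : g 0 = 0 := by
    have h0 := hgadd 0 0
    rw [add_zero] at h0
    exact (left_eq_add.mp h0)
  set gens : Set (Z.X × Z.X) := {p | ∃ y S, p = (mm y S, mm y (g S))} with hgens
  set M : Submodule ℂ (Z.X × Z.X) := Submodule.span ℂ gens with hM
  have base_inner : ∀ (y : Y2.X) (S : O) (y' : Y2.X) (S' : O),
      Z.inner (mm y (g S)) (mm y' (g S')) = g (Z.inner (mm y S) (mm y' S')) := by
    intro y S y' S'
    rw [hmod.inner, hmod.inner, hgmul, hgmul, hgstar, hgπ]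
  have spanInner : ∀ p ∈ M, ∀ q ∈ M, Z.inner p.2 q.2 = g (Z.inner p.1 q.1) := by
    intro p hp
    induction hp using Submodule.span_induction with
    | mem p hpm =>
        intro q hq
        induction hq using Submodule.span_induction with
        | mem q hqm =>
            obtain ⟨y, S, rfl⟩ := hpm
            obtain ⟨y', S', rfl⟩ := hqm
            exact base_inner y S y' S'
        | zero => simp [Z.inner_zero_right', hg0]
        | add q r _ _ hq hr =>
            simp only [Prod.fst_add, Prod.snd_add]
            rw [Z.inner_add_right, Z.inner_add_right, hq, hr, hgadd]
        | smul c q _ hq =>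
            simp only [Prod.smul_fst, Prod.smul_snd]
            rw [Z.inner_smul_right, Z.inner_smul_right, hq, hgsmul]
    | zero =>
        intro q hq
        simp [Z.inner_zero_left', hg0]
    | add p r _ _ hp hr =>
        intro q hq
        simp only [Prod.fst_add, Prod.snd_add]
        rw [Z.inner_add_left', Z.inner_add_left', hp q hq, hr q hq, hgadd]
    | smul c p _ hp =>
        intro q hq
        simp only [Prod.smul_fst, Prod.smul_snd]
        rw [Z.inner_smul_left', Z.inner_smul_left', hp q hq, hgsmul]
  have spanNorm : ∀ p ∈ M, ‖p.2‖ = ‖p.1‖ := by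
    intro p hp
    have h2 : ‖p.2‖ ^ 2 = ‖p.1‖ ^ 2 := by
      rw [Z.norm_eq, Z.norm_eq, spanInner p hp p hp, hgnorm]
    calc ‖p.2‖ = Real.sqrt (‖p.2‖ ^ 2) := (Real.sqrt_sq (norm_nonneg _)).symm
      _ = Real.sqrt (‖p.1‖ ^ 2) := by rw [h2]
      _ = ‖p.1‖ := Real.sqrt_sq (norm_nonneg _)
  set N : Submodule ℂ (Z.X × Z.X) := M.topologicalClosure with hN
  have hNnorm : ∀ p ∈ N, ‖p.2‖ = ‖p.1‖ := by
    intro p hp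
    have hsub : (N : Set (Z.X × Z.X)) ⊆ {p : Z.X × Z.X | ‖p.2‖ = ‖p.1‖} := by
      rw [hN, Submodule.topologicalClosure_coe]
      exact closure_minimal spanNorm
        (isClosed_eq (continuous_snd.norm) (continuous_fst.norm))
    exact hsub hp
  have hNclosed : IsClosed (N : Set (Z.X × Z.X)) := Submodule.isClosed_topologicalClosure M
  have hgenN : ∀ (y : Y2.X) (S : O), (mm y S, mm y (g S)) ∈ N :=
    fun y S => Submodule.le_topologicalClosure M (Submodule.subset_span ⟨y, S, rfl⟩)
  have huniq : ∀ (ζ w w' : Z.X), (ζ, w) ∈ N → (ζ, w') ∈ N → w = w' := by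
    intro ζ w w' h1 h2
    have h3 : ((ζ, w) - (ζ, w')) ∈ N := sub_mem h1 h2
    have h4 := hNnorm _ h3
    simp only [Prod.fst_sub, Prod.snd_sub, sub_self, norm_zero] at h4
    exact sub_eq_zero.mp (norm_eq_zero.mp h4)
  have htotal : ∀ ζ : Z.X, ∃ w, (ζ, w) ∈ N := by
    set K : Set Z.X := {ζ | ∃ w, (ζ, w) ∈ N} with hK
    have hKclosed : IsClosed K := by
      rw [← isSeqClosed_iff_isClosed]
      intro u ζ hu hlim
      choose w hw using hu
      have hcu : CauchySeq u := hlim.cauchySeq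
      have hdist : ∀ m n, dist (w m) (w n) = dist (u m) (u n) := by
        intro m n
        have hmem : ((u m, w m) - (u n, w n)) ∈ N := sub_mem (hw m) (hw n)
        have h5 := hNnorm _ hmem
        simpa [dist_eq_norm] using h5
      have hcw : CauchySeq w := by
        rw [Metric.cauchySeq_iff] at hcu ⊢
        intro ε hε
        obtain ⟨Nn, hNn⟩ := hcu ε hε
        exact ⟨Nn, fun m hm n hn => by rw [hdist]; exact hNn m hm n hn⟩
      obtain ⟨wl, hwl⟩ := cauchySeq_tendsto_of_complete hcw
      have hpair : Filter.Tendsto (fun n => (u n, w n)) Filter.atTop (nhds (ζ, wl)) :=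
        hlim.prodMk_nhds hwl
      exact ⟨wl, hNclosed.mem_of_tendsto hpair (Filter.Eventually.of_forall hw)⟩
    let KS : Submodule ℂ Z.X :=
      { carrier := K
        add_mem' := by
          rintro a b ⟨wa, ha⟩ ⟨wb, hb⟩
          exact ⟨wa + wb, by simpa [Prod.mk_add_mk] using add_mem ha hb⟩
        zero_mem' := ⟨0, zero_mem N⟩
        smul_mem' := by
          rintro c x ⟨wx, hx⟩
          exact ⟨c • wx, by simpa [Prod.smul_mk] using N.smul_mem c hx⟩ }
    have hKspan : ((Submodule.span ℂ {ζ : Z.X | ∃ y S, ζ = mm y S} : Submodule ℂ Z.X) : Set Z.X)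
        ⊆ K := by
      have hle : Submodule.span ℂ {ζ : Z.X | ∃ y S, ζ = mm y S} ≤ KS := by
        rw [Submodule.span_le]
        rintro ζ ⟨y, S, rfl⟩
        exact ⟨mm y (g S), hgenN y S⟩
      exact fun ζ hζ => hle hζ
    intro ζ
    have h1 : closure ((Submodule.span ℂ {ζ : Z.X | ∃ y S, ζ = mm y S} : Submodule ℂ Z.X)
        : Set Z.X) ⊆ K := closure_minimal hKspan hKclosed
    rw [hmod.dense] at h1
    exact h1 trivial
  choose Ψ hΨ using htotal
  have hmmΨ : ∀ y S, Ψ (mm y S) = mm y (g S) := fun y S =>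
    huniq _ _ _ (hΨ _) (hgenN y S)
  have haddΨ : ∀ x y, Ψ (x + y) = Ψ x + Ψ y := by
    intro x y
    have h1 : (x + y, Ψ x + Ψ y) ∈ N := by
      simpa [Prod.mk_add_mk] using add_mem (hΨ x) (hΨ y)
    exact huniq _ _ _ (hΨ _) h1
  have hsmulΨ : ∀ (c : ℂ) x, Ψ (c • x) = c • Ψ x := by
    intro c x
    have h1 : (c • x, c • Ψ x) ∈ N := by
      simpa [Prod.smul_mk] using N.smul_mem c (hΨ x)
    exact huniq _ _ _ (hΨ _) h1
  have hiso : Isometry Ψ := by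
    refine Isometry.of_dist_eq ?_
    intro a b
    have h1 : ((a, Ψ a) - (b, Ψ b)) ∈ N := sub_mem (hΨ a) (hΨ b)
    have h5 := hNnorm _ h1
    simpa [dist_eq_norm] using h5
  exact ⟨Ψ, hmmΨ, haddΨ, hsmulΨ, hiso⟩

end AuxGauge

/-- For the `𝒪(Y₁)`-correspondence `ℰY₂ = Y₂ ⊗_A 𝒪(Y₁)`
(with left action determined by `θ₁₂`) and every `z ∈ 𝕋`, the pair
`(γ_z, 1_{Y₂} ⊗ γ_z)` is a C*-correspondence automorphism of `ℰY₂`: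
`1 ⊗ γ_z` intertwines the left action along `γ_z`, transforms inner
products by `γ_z`, and is surjective (indeed bijective). -/
theorem gauge_pair_is_correspondence_automorphism
    {A : Type u} [NonUnitalCStarAlgebra A]
    (Y1 Y2 : Corr A) (h1 : Y1.Reg) (h2 : Y2.Reg)
    (T12 T21 : Corr A)
    (m12 : Y1.X → Y2.X → T12.X) (m21 : Y2.X → Y1.X → T21.X)
    (hT12 : IsTensor Y1 Y2 T12 m12) (hT21 : IsTensor Y2 Y1 T21 m21)
    (θ12 : T12.X → T21.X) (hθ : IsCorrIsoFun T12 T21 θ12)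
    (C : CPAlg Y1) (γ : ℂ → C.O → C.O) (hγ : IsGaugeAut C γ)
    (Z : Corr C.O) (mm : Y2.X → C.O → Z.X)
    (hZ : ECorrData Y1 Y2 T12 m12 T21 m21 θ12 C Z mm) :
    ∀ z : ℂ, ‖z‖ = 1 →
      ∃ Ψ : Z.X → Z.X, IsCLMap Ψ ∧
        (∀ y S, Ψ (mm y S) = mm y (γ z S)) ∧
        Function.Bijective Ψ ∧
        (∀ (T : C.O) (ξ : Z.X), Ψ (Z.lactL T ξ) = Z.lactL (γ z T) (Ψ ξ)) ∧
        ∀ ξ η, Z.inner (Ψ ξ) (Ψ η) = γ z (Z.inner ξ η) := by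
    classical
  intro z hz
  obtain ⟨hhomz, hbijz, htz, hπz⟩ := hγ z hz
  have hzb : ‖star z‖ = 1 := by rw [norm_star]; exact hz
  obtain ⟨hhomb, hbijb, htb, hπb⟩ := hγ (star z) hzb
  -- contractivity of the gauge automorphisms
  have contract : ∀ (w : ℂ), ‖w‖ = 1 → ∀ p, ‖γ w p‖ ≤ ‖p‖ := by
    intro w hw p
    obtain ⟨hh, -, -, -⟩ := hγ w hw
    have h0 : γ w 0 = 0 := by
      have h1 := hh.map_add 0 0
      rw [add_zero] at h1
      exact (left_eq_add.mp h1)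
    let G : C.O →⋆ₙₐ[ℂ] C.O :=
      { toFun := γ w
        map_add' := hh.map_add
        map_zero' := h0
        map_mul' := hh.map_mul
        map_star' := hh.map_star
        map_smul' := hh.map_smul }
    exact NonUnitalStarAlgHom.norm_apply_le G p
  have contz : Continuous (γ z) :=
    continuous_of_additive_bound _ hhomz.map_add 1
      (fun p => by rw [one_mul]; exact contract z hz p)
  have contb : Continuous (γ (star z)) :=
    continuous_of_additive_bound _ hhomb.map_add 1
      (fun p => by rw [one_mul]; exact contract (star z) hzb p)
  -- z * star z = 1
  have hz1 : z * star z = 1 := by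
    rw [Complex.star_def, Complex.mul_conj]
    rw [Complex.normSq_eq_norm_sq, hz]
    norm_num
  have hz1' : star z * z = 1 := by rw [mul_comm]; exact hz1
  -- inverse laws
  have hinv1 : ∀ p, γ (star z) (γ z p) = p := by
    intro p
    refine C.gen {p | γ (star z) (γ z p) = p}
      (isClosed_eq (contb.comp contz) continuous_id) ?_ ?_ ?_ ?_ ?_ ?_ p
    · intro a
      show γ (star z) (γ z (C.π a)) = C.π a
      rw [hπz, hπb]
    · intro x
      show γ (star z) (γ z (C.t x)) = C.t x
      rw [htz, hhomb.map_smul, htb, smul_smul, hz1, one_smul]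
    · intro p q hp hq
      show γ (star z) (γ z (p + q)) = p + q
      rw [hhomz.map_add, hhomb.map_add]
      exact congrArg₂ (· + ·) hp hq
    · intro p q hp hq
      show γ (star z) (γ z (p * q)) = p * q
      rw [hhomz.map_mul, hhomb.map_mul]
      exact congrArg₂ (· * ·) hp hq
    · intro c p hp
      show γ (star z) (γ z (c • p)) = c • p
      rw [hhomz.map_smul, hhomb.map_smul]
      exact congrArg (c • ·) hp
    · intro p hp
      show γ (star z) (γ z (star p)) = star p
      rw [hhomz.map_star, hhomb.map_star]
      exact congrArg star hp
  have hinv2 : ∀ p, γ z (γ (star z) p) = p := by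
    intro p
    refine C.gen {p | γ z (γ (star z) p) = p}
      (isClosed_eq (contz.comp contb) continuous_id) ?_ ?_ ?_ ?_ ?_ ?_ p
    · intro a
      show γ z (γ (star z) (C.π a)) = C.π a
      rw [hπb, hπz]
    · intro x
      show γ z (γ (star z) (C.t x)) = C.t x
      rw [htb, hhomz.map_smul, htz, smul_smul, hz1', one_smul]
    · intro p q hp hq
      show γ z (γ (star z) (p + q)) = p + q
      rw [hhomb.map_add, hhomz.map_add]
      exact congrArg₂ (· + ·) hp hq
    · intro p q hp hq
      show γ z (γ (star z) (p * q)) = p * q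
      rw [hhomb.map_mul, hhomz.map_mul]
      exact congrArg₂ (· * ·) hp hq
    · intro c p hp
      show γ z (γ (star z) (c • p)) = c • p
      rw [hhomb.map_smul, hhomz.map_smul]
      exact congrArg (c • ·) hp
    · intro p hp
      show γ z (γ (star z) (star p)) = star p
      rw [hhomb.map_star, hhomz.map_star]
      exact congrArg star hp
  -- the gauge automorphisms are isometric
  have hnormz : ∀ p, ‖γ z p‖ = ‖p‖ := by
    intro p
    refine le_antisymm (contract z hz p) ?_
    calc ‖p‖ = ‖γ (star z) (γ z p)‖ := by rw [hinv1]
      _ ≤ ‖γ z p‖ := contract (star z) hzb _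
  have hnormb : ∀ p, ‖γ (star z) p‖ = ‖p‖ := by
    intro p
    refine le_antisymm (contract (star z) hzb p) ?_
    calc ‖p‖ = ‖γ z (γ (star z) p)‖ := by rw [hinv2]
      _ ≤ ‖γ (star z) p‖ := contract z hz _
  -- construct Ψ and its inverse
  obtain ⟨Ψ, hΨmm, hΨadd, hΨsmul, hΨiso⟩ :=
    exists_psi Y2 C.O C.π Z mm hZ.mod (γ z) hhomz.map_add hhomz.map_smul
      hhomz.map_mul hhomz.map_star hπz hnormz
  obtain ⟨Ψ', hΨ'mm, hΨ'add, hΨ'smul, hΨ'iso⟩ :=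
    exists_psi Y2 C.O C.π Z mm hZ.mod (γ (star z)) hhomb.map_add hhomb.map_smul
      hhomb.map_mul hhomb.map_star hπb hnormb
  have contΨ : Continuous Ψ := hΨiso.continuous
  have contΨ' : Continuous Ψ' := hΨ'iso.continuous
  have hli : ∀ ζ, Ψ' (Ψ ζ) = ζ := by
    refine ext_on_dense {ζ : Z.X | ∃ y S, ζ = mm y S} hZ.mod.dense
      (fun ζ => Ψ' (Ψ ζ)) id (contΨ'.comp contΨ) continuous_id
      (fun x y => by simp only [hΨadd, hΨ'add]) (fun x y => rfl)
      (fun c => c)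
      (fun c x => by simp only [hΨsmul, hΨ'smul]) (fun c x => rfl) ?_
    rintro ζ ⟨y, S, rfl⟩
    show Ψ' (Ψ (mm y S)) = mm y S
    rw [hΨmm, hΨ'mm, hinv1]
  have hri : ∀ ζ, Ψ (Ψ' ζ) = ζ := by
    refine ext_on_dense {ζ : Z.X | ∃ y S, ζ = mm y S} hZ.mod.dense
      (fun ζ => Ψ (Ψ' ζ)) id (contΨ.comp contΨ') continuous_id
      (fun x y => by simp only [hΨ'add, hΨadd]) (fun x y => rfl)
      (fun c => c)
      (fun c x => by simp only [hΨ'smul, hΨsmul]) (fun c x => rfl) ?_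
    rintro ζ ⟨y, S, rfl⟩
    show Ψ (Ψ' (mm y S)) = mm y S
    rw [hΨ'mm, hΨmm, hinv2]
  have hbijΨ : Function.Bijective Ψ :=
    Function.bijective_iff_has_inverse.mpr ⟨Ψ', hli, hri⟩
  -- continuity of the inner product in each variable
  have innerR : ∀ c : Z.X, Continuous (fun w => Z.inner c w) := by
    intro c
    exact continuous_of_additive_bound _ (Z.inner_add_right c)
      (3 * (‖c‖ + 1) ^ 2) (fun w => Z.norm_inner_le_right' c w)
  have innerL : ∀ c : Z.X, Continuous (fun w => Z.inner w c) := by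
    intro c
    exact continuous_of_additive_bound _ (fun x y => Z.inner_add_left' x y c)
      (3 * (‖c‖ + 1) ^ 2) (fun w => Z.norm_inner_le_left' w c)
  -- the inner-product identity
  have hInner : ∀ ξ η, Z.inner (Ψ ξ) (Ψ η) = γ z (Z.inner ξ η) := by
    have step1 : ∀ (y : Y2.X) (S : C.O) (η : Z.X),
        Z.inner (Ψ (mm y S)) (Ψ η) = γ z (Z.inner (mm y S) η) := by
      intro y S
      refine ext_on_dense {ζ : Z.X | ∃ y' S', ζ = mm y' S'} hZ.mod.dense
        (fun η => Z.inner (Ψ (mm y S)) (Ψ η)) (fun η => γ z (Z.inner (mm y S) η))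
        ((innerR _).comp contΨ) (contz.comp (innerR _))
        (fun x y' => by simp only [hΨadd, Z.inner_add_right])
        (fun x y' => by simp only [Z.inner_add_right, hhomz.map_add])
        (fun c => c)
        (fun c x => by simp only [hΨsmul, Z.inner_smul_right])
        (fun c x => by simp only [Z.inner_smul_right, hhomz.map_smul]) ?_
      rintro η ⟨y', S', rfl⟩
      show Z.inner (Ψ (mm y S)) (Ψ (mm y' S')) = γ z (Z.inner (mm y S) (mm y' S'))
      rw [hΨmm, hΨmm, hZ.mod.inner, hZ.mod.inner,
          hhomz.map_mul, hhomz.map_mul, hhomz.map_star, hπz]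
    intro ξ η
    revert ξ
    refine ext_on_dense {ζ : Z.X | ∃ y S, ζ = mm y S} hZ.mod.dense
      (fun ξ => Z.inner (Ψ ξ) (Ψ η)) (fun ξ => γ z (Z.inner ξ η))
      ((innerL _).comp contΨ) (contz.comp (innerL _))
      (fun x y => by simp only [hΨadd, Z.inner_add_left'])
      (fun x y => by simp only [Z.inner_add_left', hhomz.map_add])
      (fun c => star c)
      (fun c x => by simp only [hΨsmul, Z.inner_smul_left'])
      (fun c x => by simp only [Z.inner_smul_left', hhomz.map_smul]) ?_
    rintro ξ ⟨y, S, rfl⟩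
    exact step1 y S η
  -- the action of t x on generators, via μ
  obtain ⟨μ, hμcl, hμmm, hμact⟩ := hZ.lact_t
  have hμΨ : ∀ u S, Ψ (μ u S) = z • μ u (γ z S) := by
    intro u S
    revert u
    refine ext_on_dense {w : T21.X | ∃ x y, w = m21 x y} hT21.dense
      (fun u => Ψ (μ u S)) (fun u => z • μ u (γ z S))
      (contΨ.comp (hμcl S).cont) (((hμcl (γ z S)).cont).const_smul z)
      (fun x y => by simp only [(hμcl S).map_add, hΨadd])
      (fun x y => by simp only [(hμcl (γ z S)).map_add, smul_add])
      (fun c => c)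
      (fun c x => by simp only [(hμcl S).map_smul, hΨsmul])
      (fun c x => by simp only [(hμcl (γ z S)).map_smul, smul_comm z c]) ?_
    rintro u ⟨x, y, rfl⟩
    show Ψ (μ (m21 x y) S) = z • μ (m21 x y) (γ z S)
    rw [hμmm, hΨmm, hμmm, hhomz.map_mul, htz, smul_mul_assoc, hZ.mod.smul_right]
  -- case π a
  have hcaseπ : ∀ a (ξ : Z.X), Ψ (Z.lactL (C.π a) ξ) = Z.lactL (γ z (C.π a)) (Ψ ξ) := by
    intro a
    have h1 : γ z (C.π a) = C.π a := hπz a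
    rw [h1]
    refine ext_on_dense {ζ : Z.X | ∃ y S, ζ = mm y S} hZ.mod.dense
      (fun ξ => Ψ (Z.lactL (C.π a) ξ)) (fun ξ => Z.lactL (C.π a) (Ψ ξ))
      (contΨ.comp (Z.lactL (C.π a)).continuous) ((Z.lactL (C.π a)).continuous.comp contΨ)
      (fun x y => by simp only [map_add, hΨadd])
      (fun x y => by simp only [hΨadd, map_add])
      (fun c => c)
      (fun c x => by simp only [map_smul, hΨsmul])
      (fun c x => by simp only [hΨsmul, map_smul]) ?_
    rintro ζ ⟨y, S, rfl⟩
    show Ψ (Z.lactL (C.π a) (mm y S)) = Z.lactL (C.π a) (Ψ (mm y S))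
    rw [hZ.lact_pi, hΨmm, hΨmm, hZ.lact_pi]
  -- case t x
  have hcaset : ∀ x (ξ : Z.X), Ψ (Z.lactL (C.t x) ξ) = Z.lactL (γ z (C.t x)) (Ψ ξ) := by
    intro x
    have h1 : γ z (C.t x) = z • C.t x := htz x
    have h2 : ∀ ξ : Z.X, Z.lactL (z • C.t x) ξ = z • Z.lactL (C.t x) ξ := by
      intro ξ
      rw [Z.lact_smul]
      rfl
    rw [h1]
    have h3 : ∀ ξ : Z.X, Ψ (Z.lactL (C.t x) ξ) = z • Z.lactL (C.t x) (Ψ ξ) := by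
      refine ext_on_dense {ζ : Z.X | ∃ y S, ζ = mm y S} hZ.mod.dense
        (fun ξ => Ψ (Z.lactL (C.t x) ξ)) (fun ξ => z • Z.lactL (C.t x) (Ψ ξ))
        (contΨ.comp (Z.lactL (C.t x)).continuous)
        (((Z.lactL (C.t x)).continuous.comp contΨ).const_smul z)
        (fun a b => by simp only [map_add, hΨadd])
        (fun a b => by simp only [hΨadd, map_add, smul_add])
        (fun c => c)
        (fun c a => by simp only [map_smul, hΨsmul])
        (fun c a => by simp only [hΨsmul, map_smul, smul_comm z c]) ?_
      rintro ζ ⟨y, S, rfl⟩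
      show Ψ (Z.lactL (C.t x) (mm y S)) = z • Z.lactL (C.t x) (Ψ (mm y S))
      rw [hμact, hμΨ, hΨmm, hμact]
    intro ξ
    rw [h3 ξ, h2 (Ψ ξ)]
  -- the full intertwining via the generating property
  have hlact : ∀ (T : C.O) (ξ : Z.X), Ψ (Z.lactL T ξ) = Z.lactL (γ z T) (Ψ ξ) := by
    intro T
    have hmem : T ∈ {T : C.O | ∀ ξ : Z.X, Ψ (Z.lactL T ξ) = Z.lactL (γ z T) (Ψ ξ)} := by
      refine C.gen _ ?_ ?_ ?_ ?_ ?_ ?_ ?_ T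
      · -- closed
        have heq : {T : C.O | ∀ ξ : Z.X, Ψ (Z.lactL T ξ) = Z.lactL (γ z T) (Ψ ξ)}
            = ⋂ ξ : Z.X, {T : C.O | Ψ (Z.lactL T ξ) = Z.lactL (γ z T) (Ψ ξ)} := by
          ext T
          simp [Set.mem_iInter]
        rw [heq]
        refine isClosed_iInter fun ξ => isClosed_eq ?_ ?_
        · obtain ⟨K, hK0, hKb⟩ := Z.lact_bound ξ
          refine contΨ.comp (continuous_of_additive_bound _ ?_ K hKb)
          intro a b
          rw [Z.lact_add]
          rfl
        · obtain ⟨K, hK0, hKb⟩ := Z.lact_bound (Ψ ξ)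
          have c1 : Continuous fun T : C.O => Z.lactL T (Ψ ξ) := by
            refine continuous_of_additive_bound _ ?_ K hKb
            intro a b
            rw [Z.lact_add]
            rfl
          exact c1.comp contz
      · exact hcaseπ
      · exact hcaset
      · intro p q hp hq ξ
        show Ψ (Z.lactL (p + q) ξ) = Z.lactL (γ z (p + q)) (Ψ ξ)
        rw [Z.lact_add, hhomz.map_add, Z.lact_add]
        show Ψ (Z.lactL p ξ + Z.lactL q ξ) = Z.lactL (γ z p) (Ψ ξ) + Z.lactL (γ z q) (Ψ ξ)
        rw [hΨadd, hp ξ, hq ξ]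
      · intro p q hp hq ξ
        show Ψ (Z.lactL (p * q) ξ) = Z.lactL (γ z (p * q)) (Ψ ξ)
        rw [Z.lact_mul, hhomz.map_mul, Z.lact_mul]
        show Ψ (Z.lactL p (Z.lactL q ξ)) = Z.lactL (γ z p) (Z.lactL (γ z q) (Ψ ξ))
        rw [hp, hq]
      · intro c p hp ξ
        show Ψ (Z.lactL (c • p) ξ) = Z.lactL (γ z (c • p)) (Ψ ξ)
        rw [Z.lact_smul, hhomz.map_smul, Z.lact_smul]
        show Ψ (c • Z.lactL p ξ) = c • Z.lactL (γ z p) (Ψ ξ)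
        rw [hΨsmul, hp ξ]
      · intro p hp ξ
        show Ψ (Z.lactL (star p) ξ) = Z.lactL (γ z (star p)) (Ψ ξ)
        have key : ∀ η, Z.inner η (Ψ (Z.lactL (star p) ξ))
            = Z.inner η (Z.lactL (γ z (star p)) (Ψ ξ)) := by
          intro η
          obtain ⟨η₀, rfl⟩ := hbijΨ.2 η
          calc Z.inner (Ψ η₀) (Ψ (Z.lactL (star p) ξ))
              = γ z (Z.inner η₀ (Z.lactL (star p) ξ)) := hInner _ _
            _ = γ z (Z.inner (Z.lactL p η₀) ξ) := by rw [Z.lact_adjoint]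
            _ = Z.inner (Ψ (Z.lactL p η₀)) (Ψ ξ) := (hInner _ _).symm
            _ = Z.inner (Z.lactL (γ z p) (Ψ η₀)) (Ψ ξ) := by rw [hp]
            _ = Z.inner (Ψ η₀) (Z.lactL (star (γ z p)) (Ψ ξ)) := Z.lact_adjoint _ _ _
            _ = Z.inner (Ψ η₀) (Z.lactL (γ z (star p)) (Ψ ξ)) := by rw [← hhomz.map_star]
        set u := Ψ (Z.lactL (star p) ξ) with hu
        set v := Z.lactL (γ z (star p)) (Ψ ξ) with hv
        have hdiff : Z.inner (u - v) (u - v) = 0 := by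
          rw [Z.inner_sub_right', key (u - v), sub_self]
        have := Z.eq_zero_of_inner_self _ hdiff
        exact sub_eq_zero.mp this
    exact hmem
  exact ⟨Ψ, ⟨hΨadd, hΨsmul, contΨ⟩, hΨmm, hbijΨ, hlact, hInner⟩
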